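/- The product of two symmetric and unimodal polynomials with nonnegative real coefficients is symmetric and unimodal. -/

import Mathlib

open Polynomial

/-- A real polynomial `p` of degree `d` is symmetric if `a_i = a_{d-i}` for all `0 ≤ i ≤ d`. -/
def IsSymmPoly (p : Polynomial ℝ) : Prop :=
  ∀ i ≤ p.natDegree, p.coeff i = p.coeff (p.natDegree - i)

/-- A real polynomial `p` of degree `d` is unimodal if there is `k ≤ d` with
`a_0 ≤ a_1 ≤ ⋯ ≤ a_k ≥ a_{k+1} ≥ ⋯ ≥ a_d`. -/
def IsUnimodalPoly (p : Polynomial ℝ) : Prop :=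
  ∃ k ≤ p.natDegree, (∀ i, i < k → p.coeff i ≤ p.coeff (i + 1)) ∧
    (∀ i, k ≤ i → i < p.natDegree → p.coeff (i + 1) ≤ p.coeff i)


section Aux

noncomputable def T (m : ℕ) : Polynomial ℝ := ∑ i ∈ Finset.range (m+1), Polynomial.X ^ i

lemma T_coeff (m n : ℕ) : (T m).coeff n = if n ≤ m then 1 else 0 := by
  simp [T, finset_sum_coeff, coeff_X_pow, Nat.lt_succ_iff]

lemma TT_coeff (m m' n : ℕ) :
    (T m * T m').coeff n = ((min n m + 1 - (n - m') : ℕ) : ℝ) := by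
  rw [coeff_mul, Finset.Nat.sum_antidiagonal_eq_sum_range_succ_mk]
  have : ∀ k ∈ Finset.range (n+1),
      (T m).coeff k * (T m').coeff (n - k) =
      if k ≤ m ∧ n - k ≤ m' then (1:ℝ) else 0 := by
    intro k _
    rw [T_coeff, T_coeff]
    by_cases h1 : k ≤ m <;> by_cases h2 : n - k ≤ m' <;> simp [h1, h2]
  rw [Finset.sum_congr rfl this, ← Finset.sum_filter]
  have hset : (Finset.range (n+1)).filter (fun k => k ≤ m ∧ n - k ≤ m')
      = Finset.Icc (n - m') (min n m) := by
    ext k; simp [Nat.lt_succ_iff]; omega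
  rw [hset]
  simp [Nat.card_Icc]

/-- `p` behaves like a nonneg, symmetric (about `d/2`), unimodal polynomial supported on `[0,d]`. -/
def Good (d : ℕ) (p : Polynomial ℝ) : Prop :=
  (∀ i, 0 ≤ p.coeff i) ∧ (∀ i, d < i → p.coeff i = 0) ∧
  (∀ i j, i + j = d → p.coeff i = p.coeff j) ∧
  (∀ i, 2*i < d → p.coeff i ≤ p.coeff (i+1))

lemma good_TT (m m' : ℕ) : Good (m + m') (T m * T m') := by
  refine ⟨fun i => ?_, fun i hi => ?_, fun i j hij => ?_, fun i hi => ?_⟩ <;>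
    simp only [TT_coeff]
  · positivity
  · norm_cast; omega
  · norm_cast; omega
  · rw [Nat.cast_le]; omega

lemma good_zero (d : ℕ) : Good d 0 := by
  refine ⟨fun i => ?_, fun i _ => ?_, fun i j _ => ?_, fun i _ => ?_⟩ <;> simp

lemma good_add {d : ℕ} {p q : Polynomial ℝ} (hp : Good d p) (hq : Good d q) :
    Good d (p + q) := by
  obtain ⟨h1, h2, h3, h4⟩ := hp
  obtain ⟨g1, g2, g3, g4⟩ := hq
  refine ⟨fun i => ?_, fun i hi => ?_, fun i j hij => ?_, fun i hi => ?_⟩ <;>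
    simp only [coeff_add]
  · exact add_nonneg (h1 i) (g1 i)
  · rw [h2 i hi, g2 i hi, add_zero]
  · rw [h3 i j hij, g3 i j hij]
  · exact add_le_add (h4 i hi) (g4 i hi)

lemma good_smul {d : ℕ} {c : ℝ} (hc : 0 ≤ c) {p : Polynomial ℝ} (hp : Good d p) :
    Good d (c • p) := by
  obtain ⟨h1, h2, h3, h4⟩ := hp
  refine ⟨fun i => ?_, fun i hi => ?_, fun i j hij => ?_, fun i hi => ?_⟩ <;>
    simp only [coeff_smul, smul_eq_mul]
  · exact mul_nonneg hc (h1 i)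
  · rw [h2 i hi, mul_zero]
  · rw [h3 i j hij]
  · exact mul_le_mul_of_nonneg_left (h4 i hi) hc

lemma good_sum {d : ℕ} {s : Finset ℕ} {f : ℕ → Polynomial ℝ}
    (h : ∀ j ∈ s, Good d (f j)) : Good d (∑ j ∈ s, f j) := by
  classical
  induction s using Finset.induction_on with
  | empty => simpa using good_zero d
  | insert x t hx ih =>
    rw [Finset.sum_insert hx]
    exact good_add (h _ (Finset.mem_insert_self _ _))
      (ih fun j hj => h j (Finset.mem_insert_of_mem hj))

lemma good_shift {d : ℕ} {p : Polynomial ℝ} (hp : Good d p) (s : ℕ) :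
    Good (d + 2*s) (p * Polynomial.X ^ s) := by
  obtain ⟨h1, h2, h3, h4⟩ := hp
  refine ⟨fun i => ?_, fun i hi => ?_, fun i j hij => ?_, fun i hi => ?_⟩ <;>
    simp only [coeff_mul_X_pow']
  · split
    · exact h1 _
    · exact le_rfl
  · split
    · exact h2 _ (by omega)
    · rfl
  · by_cases hsi : s ≤ i <;> by_cases hsj : s ≤ j <;> simp only [hsi, hsj, if_true, if_false]
    · exact h3 _ _ (by omega)
    · exact h2 _ (by omega)
    · exact (h2 _ (by omega)).symm
  · by_cases hsi : s ≤ i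
    · have hsi1 : s ≤ i + 1 := by omega
      simp only [hsi, hsi1, if_true]
      have : i + 1 - s = (i - s) + 1 := by omega
      rw [this]
      exact h4 _ (by omega)
    · simp only [hsi, if_false]
      split
      · exact h1 _
      · exact le_rfl

noncomputable def lam (p : Polynomial ℝ) (j : ℕ) : ℝ :=
  if j = 0 then p.coeff 0 else p.coeff j - p.coeff (j-1)

lemma lam_sum (p : Polynomial ℝ) (t : ℕ) :
    ∑ j ∈ Finset.range (t+1), lam p j = p.coeff t := by
  induction t with
  | zero => simp [lam]
  | succ n ih =>
    rw [Finset.sum_range_succ, ih, lam]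
    simp

lemma lam_nonneg {d : ℕ} {p : Polynomial ℝ} (hp : Good d p) {j : ℕ} (hj : 2*j ≤ d) :
    0 ≤ lam p j := by
  obtain ⟨h1, h2, h3, h4⟩ := hp
  unfold lam
  split
  · exact h1 0
  · rename_i h0
    have : j - 1 + 1 = j := by omega
    have := h4 (j-1) (by omega)
    rw [‹j - 1 + 1 = j›] at this
    linarith

lemma decomp {d : ℕ} {p : Polynomial ℝ} (hp : Good d p) :
    p = ∑ j ∈ Finset.range (d/2 + 1), lam p j • (T (d - 2*j) * Polynomial.X ^ j) := by
  obtain ⟨h1, h2, h3, h4⟩ := hp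
  ext n
  rw [finset_sum_coeff]
  have hterm : ∀ j ∈ Finset.range (d/2 + 1),
      (lam p j • (T (d - 2*j) * Polynomial.X ^ j)).coeff n =
      if j ≤ n ∧ n + j ≤ d then lam p j else 0 := by
    intro j hj
    rw [Finset.mem_range] at hj
    rw [coeff_smul, coeff_mul_X_pow', smul_eq_mul]
    by_cases hjn : j ≤ n
    · rw [if_pos hjn, T_coeff]
      by_cases hnd : n + j ≤ d
      · rw [if_pos (by omega : n - j ≤ d - 2*j), if_pos ⟨hjn, hnd⟩, mul_one]
      · rw [if_neg (by omega : ¬ (n - j ≤ d - 2*j)), if_neg (by tauto), mul_zero]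
    · rw [if_neg hjn, if_neg (by tauto), mul_zero]
  rw [Finset.sum_congr rfl hterm]
  by_cases hnd : n ≤ d
  · set t := min n (d - n) with ht
    have hcond : ∀ j ∈ Finset.range (d/2 + 1), ((j ≤ n ∧ n + j ≤ d) ↔ j ≤ t) := by
      intro j hj; rw [Finset.mem_range] at hj; omega
    have : ∀ j ∈ Finset.range (d/2 + 1),
        (if j ≤ n ∧ n + j ≤ d then lam p j else 0) = if j ≤ t then lam p j else 0 := by
      intro j hj; rw [if_congr (hcond j hj) rfl rfl]
    rw [Finset.sum_congr rfl this, ← Finset.sum_filter]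
    have hfil : (Finset.range (d/2 + 1)).filter (fun j => j ≤ t) = Finset.range (t+1) := by
      ext j; simp [Nat.lt_succ_iff]; omega
    rw [hfil, lam_sum]
    rcases min_cases n (d - n) with ⟨he, _⟩ | ⟨he, _⟩
    · rw [ht, he]
    · rw [ht, he]
      exact h3 n (d - n) (by omega)
  · have : ∀ j ∈ Finset.range (d/2 + 1),
        (if j ≤ n ∧ n + j ≤ d then lam p j else 0) = 0 := by
      intro j hj; rw [if_neg (by omega)]
    rw [Finset.sum_congr rfl this, Finset.sum_const_zero, h2 n (by omega)]

lemma good_atom_mul_atom {d e j k : ℕ} (hj : 2*j ≤ d) (hk : 2*k ≤ e) :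
    Good (d + e) ((T (d - 2*j) * Polynomial.X ^ j) * (T (e - 2*k) * Polynomial.X ^ k)) := by
  have heq : (T (d - 2*j) * Polynomial.X ^ j) * (T (e - 2*k) * Polynomial.X ^ k)
      = (T (d - 2*j) * T (e - 2*k)) * Polynomial.X ^ (j + k) := by
    rw [pow_add]; ring
  rw [heq]
  have := good_shift (good_TT (d - 2*j) (e - 2*k)) (j + k)
  have harith : (d - 2*j) + (e - 2*k) + 2*(j+k) = d + e := by omega
  rwa [harith] at this

lemma good_mul {d e : ℕ} {p q : Polynomial ℝ} (hp : Good d p) (hq : Good e q) :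
    Good (d + e) (p * q) := by
  rw [decomp hp, decomp hq, Finset.sum_mul_sum]
  apply good_sum
  intro j hj
  apply good_sum
  intro k hk
  rw [Finset.mem_range] at hj hk
  have hj2 : 2*j ≤ d := by omega
  have hk2 : 2*k ≤ e := by omega
  have : (lam p j • (T (d - 2*j) * Polynomial.X ^ j)) * (lam q k • (T (e - 2*k) * Polynomial.X ^ k))
      = (lam p j * lam q k) • ((T (d - 2*j) * Polynomial.X ^ j) * (T (e - 2*k) * Polynomial.X ^ k)) := by
    rw [smul_mul_smul_comm]
  rw [this]
  exact good_smul (mul_nonneg (lam_nonneg hp hj2) (lam_nonneg hq hk2))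
    (good_atom_mul_atom hj2 hk2)

lemma antitone_chain {f : ℕ → ℝ} {k d : ℕ} (h : ∀ i, k ≤ i → i < d → f (i+1) ≤ f i)
    {a b : ℕ} (hka : k ≤ a) (hab : a ≤ b) (hbd : b ≤ d) : f b ≤ f a := by
  induction b, hab using Nat.le_induction with
  | base => exact le_rfl
  | succ n hn ih =>
    exact le_trans (h n (le_trans hka hn) (by omega)) (ih (by omega))

lemma good_of_hyps {p : Polynomial ℝ} (hp0 : ∀ i, 0 ≤ p.coeff i)
    (hps : IsSymmPoly p) (hpu : IsUnimodalPoly p) : Good p.natDegree p := by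
  obtain ⟨k, hk, hinc, hdec⟩ := hpu
  set d := p.natDegree with hd
  have hsym : ∀ i j, i + j = d → p.coeff i = p.coeff j := by
    intro i j hij
    have := hps i (by omega)
    rwa [(by omega : d - i = j)] at this
  refine ⟨hp0, fun i hi => coeff_eq_zero_of_natDegree_lt hi, hsym, fun i hi => ?_⟩
  by_cases hik : i < k
  · exact hinc i hik
  · push_neg at hik
    have h1 : p.coeff (i+1) ≤ p.coeff i := hdec i hik (by omega)
    have h2 : p.coeff (d - i) ≤ p.coeff (i+1) :=
      antitone_chain hdec (by omega : k ≤ i + 1) (by omega : i + 1 ≤ d - i) (by omega)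
    have h3 : p.coeff i = p.coeff (d - i) := hsym i (d - i) (by omega)
    linarith

lemma conclusion_of_good {r : Polynomial ℝ} (h : Good r.natDegree r) :
    IsSymmPoly r ∧ IsUnimodalPoly r := by
  obtain ⟨h1, h2, h3, h4⟩ := h
  set d := r.natDegree with hd
  constructor
  · intro i hi
    exact h3 i (d - i) (by omega)
  · refine ⟨(d+1)/2, by omega, fun i hik => h4 i (by omega), fun i hki hid => ?_⟩
    have e1 : r.coeff (i+1) = r.coeff (d - i - 1) := h3 (i+1) (d - i - 1) (by omega)
    have e2 : r.coeff i = r.coeff (d - i) := h3 i (d - i) (by omega)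
    have e3 : r.coeff (d - i - 1) ≤ r.coeff (d - i - 1 + 1) := h4 (d - i - 1) (by omega)
    have e4 : d - i - 1 + 1 = d - i := by omega
    rw [e4] at e3
    rw [e1, e2]
    exact e3

end Aux

/-- The product of two symmetric and unimodal polynomials with nonnegative real
coefficients is symmetric and unimodal. -/
theorem product_symmetric_unimodal (p q : Polynomial ℝ)
    (hp0 : ∀ i, 0 ≤ p.coeff i) (hq0 : ∀ i, 0 ≤ q.coeff i)
    (hps : IsSymmPoly p) (hpu : IsUnimodalPoly p)
    (hqs : IsSymmPoly q) (hqu : IsUnimodalPoly q) :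
    IsSymmPoly (p * q) ∧ IsUnimodalPoly (p * q) := by
  by_cases hp : p = 0
  · have : p * q = 0 := by rw [hp, zero_mul]
    rw [this]
    exact conclusion_of_good (by simpa using good_zero 0)
  · by_cases hq : q = 0
    · have : p * q = 0 := by rw [hq, mul_zero]
      rw [this]
      exact conclusion_of_good (by simpa using good_zero 0)
    · have h := good_mul (good_of_hyps hp0 hps hpu) (good_of_hyps hq0 hqs hqu)
      have hdeg : (p * q).natDegree = p.natDegree + q.natDegree := natDegree_mul hp hq
      rw [← hdeg] at h
      exact conclusion_of_good h
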